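/- Let Q be a uniformly hyperbolic set of a C¹ control system. Then the stable and unstable subspaces depend continuously on the base point: if (u_k, x_k) → (u,x) in L(Q), and if for each k one chooses an orthonormal basis of E⁻(u_k, x_k) converging (in the tangent bundle) to a tuple of vectors (v⁽¹⁾, …, v⁽ᵈ⁻⁾) in T_xM, then these limit vectors form an orthonormal basis of E⁻(u,x); the analogous statement holds for E⁺. -/

import Mathlib

/-- For a uniformly hyperbolic set, the stable and unstable subspaces depend
continuously on the base point: if `(u_k,x_k) → (u,x)` in `L(Q)` and orthonormal bases of
`E⁻(u_k,x_k)` (resp. `E⁺(u_k,x_k)`) converge vectorwise, then the limit vectors form an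
orthonormal basis of `E⁻(u,x)` (resp. `E⁺(u,x)`). -/
theorem stmt_14 {V U : Type*} [NormedAddCommGroup V] [InnerProductSpace ℝ V]
    [FiniteDimensional ℝ V] [MetricSpace U] [CompactSpace U]
    (φ : ℤ → V → (ℤ → U) → V)
    (h0 : ∀ (x : V) (u : ℤ → U), φ 0 x u = x)
    (hcoc : ∀ (t s : ℤ) (x : V) (u : ℤ → U),
      φ (t + s) x u = φ s (φ t x u) (fun n : ℤ => u (n + t)))
    (hdiff : ∀ (t : ℤ) (u : ℤ → U), Differentiable ℝ (fun x : V => φ t x u))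
    (hcontD : ∀ t : ℤ, Continuous (fun q : ((ℤ → U) × V) × V =>
      fderiv ℝ (fun x : V => φ t x q.1.1) q.1.2 q.2))
    (Q : Set V) (hQ : IsCompact Q)
    (Em Ep : (ℤ → U) × V → Submodule ℝ V)
    (c lam : ℝ) (hc : 1 ≤ c) (hlam0 : 0 < lam) (hlam1 : lam < 1)
    (hcharm : ∀ p : (ℤ → U) × V, (∀ t : ℤ, φ t p.2 p.1 ∈ Q) → ∀ v : V,
      v ∈ Em p ↔ ∀ t : ℕ, ‖fderiv ℝ (fun x : V => φ (t : ℤ) x p.1) p.2 v‖ ≤ c * lam ^ t * ‖v‖)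
    (hcharp : ∀ p : (ℤ → U) × V, (∀ t : ℤ, φ t p.2 p.1 ∈ Q) → ∀ v : V,
      v ∈ Ep p ↔ ∀ t : ℕ, ‖fderiv ℝ (fun x : V => φ (-(t : ℤ)) x p.1) p.2 v‖ ≤ c * lam ^ t * ‖v‖)
    (dm dp : ℕ)
    (hdim : ∀ p : (ℤ → U) × V, (∀ t : ℤ, φ t p.2 p.1 ∈ Q) →
      Module.finrank ℝ (Em p) = dm ∧ Module.finrank ℝ (Ep p) = dp)
    (pk : ℕ → (ℤ → U) × V) (p : (ℤ → U) × V)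
    (hpk : ∀ k, ∀ t : ℤ, φ t (pk k).2 (pk k).1 ∈ Q)
    (hp : ∀ t : ℤ, φ t p.2 p.1 ∈ Q)
    (hconv : Filter.Tendsto pk Filter.atTop (nhds p)) :
    (∀ (b : ℕ → Fin dm → V) (w : Fin dm → V),
      (∀ k, Orthonormal ℝ (b k) ∧ (∀ i, b k i ∈ Em (pk k)) ∧
        Submodule.span ℝ (Set.range (b k)) = Em (pk k)) →
      (∀ i, Filter.Tendsto (fun k => b k i) Filter.atTop (nhds (w i))) →
      Orthonormal ℝ w ∧ (∀ i, w i ∈ Em p) ∧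
        Submodule.span ℝ (Set.range w) = Em p) ∧
    (∀ (b : ℕ → Fin dp → V) (w : Fin dp → V),
      (∀ k, Orthonormal ℝ (b k) ∧ (∀ i, b k i ∈ Ep (pk k)) ∧
        Submodule.span ℝ (Set.range (b k)) = Ep (pk k)) →
      (∀ i, Filter.Tendsto (fun k => b k i) Filter.atTop (nhds (w i))) →
      Orthonormal ℝ w ∧ (∀ i, w i ∈ Ep p) ∧
        Submodule.span ℝ (Set.range w) = Ep p) := by
  have key : ∀ (E : (ℤ → U) × V → Submodule ℝ V) (f : ℕ → ℤ) (d : ℕ),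
      (∀ q : (ℤ → U) × V, (∀ t : ℤ, φ t q.2 q.1 ∈ Q) → ∀ v : V,
        v ∈ E q ↔ ∀ t : ℕ, ‖fderiv ℝ (fun x : V => φ (f t) x q.1) q.2 v‖ ≤ c * lam ^ t * ‖v‖) →
      (∀ q : (ℤ → U) × V, (∀ t : ℤ, φ t q.2 q.1 ∈ Q) → Module.finrank ℝ (E q) = d) →
      ∀ (b : ℕ → Fin d → V) (w : Fin d → V),
        (∀ k, Orthonormal ℝ (b k) ∧ (∀ i, b k i ∈ E (pk k)) ∧
          Submodule.span ℝ (Set.range (b k)) = E (pk k)) →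
        (∀ i, Filter.Tendsto (fun k => b k i) Filter.atTop (nhds (w i))) →
        Orthonormal ℝ w ∧ (∀ i, w i ∈ E p) ∧
          Submodule.span ℝ (Set.range w) = E p := by
    intro E f d hchar hdimE b w hb hw
    have hon : Orthonormal ℝ w := by
      rw [orthonormal_iff_ite]
      intro i j
      have h1 : Filter.Tendsto (fun k => (inner ℝ (b k i) (b k j) : ℝ))
          Filter.atTop (nhds (inner ℝ (w i) (w j))) := (hw i).inner (hw j)
      have h2 : (fun k => (inner ℝ (b k i) (b k j) : ℝ)) =
          fun _ => (if i = j then (1:ℝ) else 0) := by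
        funext k
        exact (orthonormal_iff_ite.mp (hb k).1) i j
      rw [h2] at h1
      exact tendsto_nhds_unique h1 tendsto_const_nhds
    have hmem : ∀ i, w i ∈ E p := by
      intro i
      rw [hchar p hp]
      intro t
      have hcont := hcontD (f t)
      have htend : Filter.Tendsto (fun k => ((pk k), b k i)) Filter.atTop
          (nhds (p, w i)) := hconv.prodMk_nhds (hw i)
      have hD : Filter.Tendsto
          (fun k => ‖fderiv ℝ (fun x : V => φ (f t) x (pk k).1) (pk k).2 (b k i)‖)
          Filter.atTop (nhds ‖fderiv ℝ (fun x : V => φ (f t) x p.1) p.2 (w i)‖) :=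
        (hcont.continuousAt.tendsto.comp htend).norm
      have hR : Filter.Tendsto (fun k => c * lam ^ t * ‖b k i‖)
          Filter.atTop (nhds (c * lam ^ t * ‖w i‖)) :=
        ((hw i).norm.const_mul _)
      refine le_of_tendsto_of_tendsto' hD hR (fun k => ?_)
      exact (hchar (pk k) (hpk k) (b k i)).mp ((hb k).2.1 i) t
    refine ⟨hon, hmem, ?_⟩
    have hle : Submodule.span ℝ (Set.range w) ≤ E p :=
      Submodule.span_le.mpr (Set.range_subset_iff.mpr hmem)
    have hli : LinearIndependent ℝ w := hon.linearIndependent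
    refine Submodule.eq_of_le_of_finrank_le hle ?_
    rw [hdimE p hp, finrank_span_eq_card hli, Fintype.card_fin]
  exact ⟨key Em (fun t => (t : ℤ)) dm hcharm (fun q hq => (hdim q hq).1),
    key Ep (fun t => -(t : ℤ)) dp hcharp (fun q hq => (hdim q hq).2)⟩
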